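/- Let f : ℂ → ℂ be a Schwartz function and let λ > 0. Then for every z ∈ ℂ one has the pointwise identity (2λ/π) ∫_ℂ exp(2iλ Re((z − w)²)) f(w) dA(w) = (1/(4π²)) ∫_ℂ exp(i Re(z ζ̄)) exp(−i Re(ζ²)/(8λ)) (Ff)(ζ) dA(ζ), where both integrals converge absolutely. -/

import Mathlib

open MeasureTheory Complex Filter
open scoped ENNReal

/-- Fourier transform `(Ff)(ζ) = ∫_ℂ e^{-i Re(z ζ̄)} f(z) dA(z)`. -/
noncomputable def fourierT (f : ℂ → ℂ) (ζ : ℂ) : ℂ :=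
  ∫ z, Complex.exp (-Complex.I * (((z * (starRingEnd ℂ) ζ).re : ℝ) : ℂ)) * f z

/-- `(e^{2iλ Re z²} ⋆ f)(z) = ∫_ℂ exp(2iλ Re((z-w)²)) f(w) dA(w)`. -/
noncomputable def phaseConv (lam : ℝ) (f : ℂ → ℂ) (z : ℂ) : ℂ :=
  ∫ w, Complex.exp (2 * Complex.I * (lam : ℂ) * (((z - w) ^ 2).re : ℂ)) * f w

open scoped Real FourierTransform RealInnerProductSpace

namespace Stmt12

lemma norm_cexp_eq_one {x : ℂ} (h : x.re = 0) : ‖Complex.exp x‖ = 1 := by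
  simp [Complex.norm_exp, h]

lemma norm_cexp_le_one {x : ℂ} (h : x.re ≤ 0) : ‖Complex.exp x‖ ≤ 1 := by
  rw [Complex.norm_exp]
  calc Real.exp x.re ≤ Real.exp 0 := Real.exp_le_exp.mpr h
    _ = 1 := Real.exp_zero

lemma cpow_half_mul_conj {w : ℂ} (hw : 0 < w.re) :
    w ^ (1/2 : ℂ) * (starRingEnd ℂ) w ^ (1/2 : ℂ) = (‖w‖ : ℂ) := by
  have harg : w.arg ≠ Real.pi := by
    intro h
    have := Complex.arg_eq_pi_iff.mp h
    linarith [this.1]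
  have h2 : (starRingEnd ℂ) w ^ (1/2 : ℂ) = (starRingEnd ℂ) (w ^ (1/2 : ℂ)) := by
    rw [Complex.conj_cpow _ _ harg]
    simp [map_ofNat]
  rw [h2, Complex.mul_conj]
  norm_cast
  rw [Complex.normSq_eq_norm_sq]
  have h3 : (1/2 : ℂ) = ((1/2 : ℝ) : ℂ) := by norm_num
  rw [h3, Complex.norm_cpow_real]
  rw [← Real.rpow_natCast (‖w‖ ^ (1/2:ℝ)) 2, ← Real.rpow_mul (norm_nonneg w)]
  norm_num

lemma integral_complex_eq (F : ℂ → ℂ) :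
    ∫ z, F z = ∫ p : ℝ × ℝ, F ⟨p.1, p.2⟩ := by
  rw [← MeasurePreserving.integral_comp' (Complex.volume_preserving_equiv_real_prod.symm)]
  rfl

lemma integrable_complex_iff (F : ℂ → ℂ) :
    Integrable F (volume : Measure ℂ) ↔
      Integrable (fun p : ℝ × ℝ => F ⟨p.1, p.2⟩) (volume : Measure (ℝ × ℝ)) := by
  rw [← MeasurePreserving.integrable_comp_emb
    (Complex.volume_preserving_equiv_real_prod.symm)
    Complex.measurableEquivRealProd.symm.measurableEmbedding]
  rfl

lemma inv4b_re_pos {b : ℂ} (hb : 0 < b.re) : (0:ℝ) < (((4:ℂ)*b)⁻¹).re := by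
  have hb0 : b ≠ 0 := fun h => by simp [h] at hb
  rw [Complex.inv_re]
  refine div_pos ?_ (Complex.normSq_pos.2 (by simp [hb0]))
  simp [Complex.mul_re]
  linarith

lemma gauss_int {b : ℂ} (hb : 0 < b.re) :
    Integrable (fun ζ : ℂ =>
      Complex.exp (-(ζ.re:ℂ)^2/(4*b) - (ζ.im:ℂ)^2/(4*(starRingEnd ℂ) b))) := by
  have hb0 : b ≠ 0 := fun h => by simp [h] at hb
  have hbc0 : (starRingEnd ℂ) b ≠ 0 := by simpa using hb0
  have h1 := inv4b_re_pos hb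
  have h2 := inv4b_re_pos (show 0 < ((starRingEnd ℂ) b).re by simpa using hb)
  rw [integrable_complex_iff]
  have heq : (fun p : ℝ × ℝ =>
      Complex.exp (-(((⟨p.1,p.2⟩:ℂ).re):ℂ)^2/(4*b) - (((⟨p.1,p.2⟩:ℂ).im):ℂ)^2/(4*(starRingEnd ℂ) b)))
      = fun p : ℝ × ℝ => (fun x : ℝ => Complex.exp (-((4*b)⁻¹) * (x:ℂ)^2)) p.1 *
          (fun y : ℝ => Complex.exp (-((4*(starRingEnd ℂ) b)⁻¹) * (y:ℂ)^2)) p.2 := by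
    funext p
    simp only
    rw [← Complex.exp_add]
    congr 1
    field_simp
    ring
  rw [heq, Measure.volume_eq_prod ℝ ℝ]
  exact (integrable_cexp_neg_mul_sq h1).mul_prod (integrable_cexp_neg_mul_sq h2)

lemma fourierT_eq (f : ℂ → ℂ) (ζ : ℂ) :
    fourierT f ζ = 𝓕 f ((2*π)⁻¹ • ζ) := by
  rw [Real.fourier_eq']
  unfold fourierT
  congr 1
  funext v
  have h1 : (inner ℝ v ((2*π)⁻¹ • ζ) : ℝ) = (2*π)⁻¹ * ((v * (starRingEnd ℂ) ζ).re) := by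
    rw [real_inner_smul_right, Complex.inner]
    congr 1
    simp [Complex.mul_re]
    ring
  rw [h1, smul_eq_mul]
  have hπ : (π:ℂ) ≠ 0 := Complex.ofReal_ne_zero.mpr Real.pi_ne_zero
  have h2 : ((-2 * π * ((2*π)⁻¹ * ((v * (starRingEnd ℂ) ζ).re)) : ℝ) : ℂ) * Complex.I
      = -Complex.I * (((v * (starRingEnd ℂ) ζ).re : ℝ) : ℂ) := by
    push_cast
    field_simp
  rw [h2]

lemma fourierT_integrable (f : SchwartzMap ℂ ℂ) : Integrable (fourierT ⇑f) := by
  have h : fourierT ⇑f = fun ζ => (SchwartzMap.fourierTransformCLM ℂ f) ((2*π)⁻¹ • ζ) := by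
    funext ζ
    rw [fourierT_eq, SchwartzMap.fourierTransformCLM_apply]
    rfl
  rw [h]
  exact (SchwartzMap.fourierTransformCLM ℂ f).integrable.comp_smul
    (by positivity : ((2*π)⁻¹ : ℝ) ≠ 0)

lemma fourierT_continuous (f : SchwartzMap ℂ ℂ) : Continuous (fourierT ⇑f) := by
  have h : fourierT ⇑f = fun ζ => (SchwartzMap.fourierTransformCLM ℂ f) ((2*π)⁻¹ • ζ) := by
    funext ζ
    rw [fourierT_eq, SchwartzMap.fourierTransformCLM_apply]
    rfl
  rw [h]
  exact (SchwartzMap.fourierTransformCLM ℂ f).continuous.comp (continuous_const_smul _)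

lemma inv_gauss {b : ℂ} (hb : 0 < b.re) (u : ℂ) :
    (∫ ζ : ℂ, Complex.exp (Complex.I * (((u * (starRingEnd ℂ) ζ).re : ℝ) : ℂ)) *
        Complex.exp (-(ζ.re:ℂ)^2 / (4*b) - (ζ.im:ℂ)^2 / (4 * (starRingEnd ℂ) b)))
      = 4 * (π:ℂ) * (‖b‖ : ℂ) *
        Complex.exp (-b * (u.re:ℂ)^2 - (starRingEnd ℂ) b * (u.im:ℂ)^2) := by
  have hb0 : b ≠ 0 := fun h => by simp [h] at hb
  have hbc0 : (starRingEnd ℂ) b ≠ 0 := by simpa using hb0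
  have h1 := inv4b_re_pos hb
  have h2 := inv4b_re_pos (show 0 < ((starRingEnd ℂ) b).re by simpa using hb)
  rw [integral_complex_eq]
  have key : ∀ p : ℝ × ℝ,
      Complex.exp (Complex.I * (((u * (starRingEnd ℂ) ((⟨p.1,p.2⟩:ℂ))).re : ℝ) : ℂ)) *
        Complex.exp (-(((⟨p.1,p.2⟩:ℂ).re):ℂ)^2 / (4*b) - (((⟨p.1,p.2⟩:ℂ).im):ℂ)^2 / (4 * (starRingEnd ℂ) b))
      = (Complex.exp (Complex.I * (u.re:ℂ) * (p.1:ℂ)) * Complex.exp (-((4*b)⁻¹) * (p.1:ℂ)^2)) *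
        (Complex.exp (Complex.I * (u.im:ℂ) * (p.2:ℂ)) * Complex.exp (-((4*(starRingEnd ℂ) b)⁻¹) * (p.2:ℂ)^2)) := by
    intro p
    have hre : ((u * (starRingEnd ℂ) ((⟨p.1,p.2⟩:ℂ))).re : ℝ) = u.re * p.1 + u.im * p.2 := by
      simp [Complex.mul_re]
    rw [hre]
    simp only [← Complex.exp_add]
    congr 1
    push_cast
    field_simp
    ring
  simp_rw [key]
  rw [Measure.volume_eq_prod ℝ ℝ, MeasureTheory.integral_prod_mul
    (fun x : ℝ => Complex.exp (Complex.I * (u.re:ℂ) * x) * Complex.exp (-((4*b)⁻¹) * (x:ℂ)^2))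
    (fun y : ℝ => Complex.exp (Complex.I * (u.im:ℂ) * y) * Complex.exp (-((4*(starRingEnd ℂ) b)⁻¹) * (y:ℂ)^2))]
  rw [fourierIntegral_gaussian h1 (u.re:ℂ), fourierIntegral_gaussian h2 (u.im:ℂ)]
  have e1 : (π:ℂ) / ((4*b)⁻¹) = π * (4*b) := by field_simp
  have e1' : (π:ℂ) / ((4*(starRingEnd ℂ) b)⁻¹) = π * (4*(starRingEnd ℂ) b) := by field_simp
  have e2 : -(↑u.re:ℂ)^2 / (4 * (4*b)⁻¹) = -b * (u.re:ℂ)^2 := by field_simp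
  have e2' : -(↑u.im:ℂ)^2 / (4 * (4*(starRingEnd ℂ) b)⁻¹) = -(starRingEnd ℂ) b * (u.im:ℂ)^2 := by
    field_simp
  rw [e1, e1', e2, e2']
  have e3 : (π:ℂ) * (4*(starRingEnd ℂ) b) = (starRingEnd ℂ) ((π:ℂ) * (4*b)) := by
    simp [map_mul, map_ofNat, Complex.conj_ofReal]
  rw [e3]
  have hw : (0:ℝ) < ((π:ℂ) * (4*b)).re := by
    simp [Complex.mul_re]
    positivity
  rw [mul_mul_mul_comm, cpow_half_mul_conj hw, ← Complex.exp_add]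
  have e4 : (‖((π:ℂ)*(4*b))‖ : ℂ) = 4 * (π:ℂ) * (‖b‖ : ℂ) := by
    rw [norm_mul, norm_mul]
    simp [Complex.norm_real, abs_of_pos Real.pi_pos]
    push_cast
    ring
  rw [e4]
  ring_nf

lemma norm_exp_I_mul (s : ℝ) (r : ℝ) : ‖Complex.exp ((s * Complex.I) * (r:ℂ))‖ = 1 := by
  simp [Complex.norm_exp, Complex.mul_re]

lemma key_identity (f : SchwartzMap ℂ ℂ) {b : ℂ} (hb : 0 < b.re) (z : ℂ) :
    (∫ ζ : ℂ, Complex.exp (Complex.I * (((z * (starRingEnd ℂ) ζ).re : ℝ) : ℂ)) *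
        Complex.exp (-(ζ.re:ℂ)^2/(4*b) - (ζ.im:ℂ)^2/(4*(starRingEnd ℂ) b)) * fourierT ⇑f ζ)
      = 4 * (π:ℂ) * (‖b‖ : ℂ) *
        ∫ w : ℂ, Complex.exp (-b*(((z-w).re:ℝ):ℂ)^2 - (starRingEnd ℂ) b*(((z-w).im:ℝ):ℂ)^2) * f w := by
  have hH := gauss_int hb
  set Φ : ℂ → ℂ → ℂ := fun ζ w =>
    Complex.exp (Complex.I * (((z * (starRingEnd ℂ) ζ).re : ℝ) : ℂ)) *
      Complex.exp (-(ζ.re:ℂ)^2/(4*b) - (ζ.im:ℂ)^2/(4*(starRingEnd ℂ) b)) *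
      (Complex.exp (-Complex.I * (((w * (starRingEnd ℂ) ζ).re : ℝ) : ℂ)) * f w) with hΦ
  have hfc : Continuous (⇑f) := f.continuous
  have hcont : Continuous (Function.uncurry Φ) := by
    apply Continuous.mul
    apply Continuous.mul
    · exact Complex.continuous_exp.comp (by fun_prop)
    · exact Complex.continuous_exp.comp (by fun_prop)
    · exact ((Complex.continuous_exp.comp (by fun_prop)).mul (hfc.comp continuous_snd))
  have hint : Integrable (Function.uncurry Φ) ((volume : Measure ℂ).prod volume) := by
    refine Integrable.mono' (g := fun q : ℂ × ℂ =>
        ‖Complex.exp (-(q.1.re:ℂ)^2/(4*b) - (q.1.im:ℂ)^2/(4*(starRingEnd ℂ) b))‖ * ‖f q.2‖)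
      (hH.norm.mul_prod f.integrable.norm) hcont.aestronglyMeasurable ?_
    refine Eventually.of_forall fun q => ?_
    have e1 : ‖Complex.exp (Complex.I * (((z * (starRingEnd ℂ) q.1).re : ℝ) : ℂ))‖ = 1 := by
      simpa using norm_exp_I_mul 1 ((z * (starRingEnd ℂ) q.1).re)
    have e2 : ‖Complex.exp (-Complex.I * (((q.2 * (starRingEnd ℂ) q.1).re : ℝ) : ℂ))‖ = 1 := by
      simpa using norm_exp_I_mul (-1) ((q.2 * (starRingEnd ℂ) q.1).re)
    calc ‖Function.uncurry Φ q‖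
        = ‖Complex.exp (Complex.I * (((z * (starRingEnd ℂ) q.1).re : ℝ) : ℂ))‖ *
            ‖Complex.exp (-(q.1.re:ℂ)^2/(4*b) - (q.1.im:ℂ)^2/(4*(starRingEnd ℂ) b))‖ *
            (‖Complex.exp (-Complex.I * (((q.2 * (starRingEnd ℂ) q.1).re : ℝ) : ℂ))‖ * ‖f q.2‖) := by
          simp [Function.uncurry, hΦ, norm_mul]
      _ = ‖Complex.exp (-(q.1.re:ℂ)^2/(4*b) - (q.1.im:ℂ)^2/(4*(starRingEnd ℂ) b))‖ * ‖f q.2‖ := by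
          rw [e1, e2]; ring
      _ ≤ _ := le_refl _
  have step1 : (∫ ζ : ℂ, Complex.exp (Complex.I * (((z * (starRingEnd ℂ) ζ).re : ℝ) : ℂ)) *
        Complex.exp (-(ζ.re:ℂ)^2/(4*b) - (ζ.im:ℂ)^2/(4*(starRingEnd ℂ) b)) * fourierT ⇑f ζ)
      = ∫ ζ : ℂ, ∫ w : ℂ, Φ ζ w := by
    refine integral_congr_ae (Eventually.of_forall fun ζ => ?_)
    beta_reduce
    rw [show fourierT ⇑f ζ = ∫ w : ℂ, Complex.exp (-Complex.I * (((w * (starRingEnd ℂ) ζ).re : ℝ) : ℂ)) * f w from rfl]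
    rw [← integral_const_mul]
  have step2 : (∫ ζ : ℂ, ∫ w : ℂ, Φ ζ w) = ∫ w : ℂ, ∫ ζ : ℂ, Φ ζ w :=
    integral_integral_swap hint
  have step3 : ∀ w : ℂ, (∫ ζ : ℂ, Φ ζ w)
      = 4 * (π:ℂ) * (‖b‖ : ℂ) *
          (Complex.exp (-b*(((z-w).re:ℝ):ℂ)^2 - (starRingEnd ℂ) b*(((z-w).im:ℝ):ℂ)^2) * f w) := by
    intro w
    have hpt : ∀ ζ : ℂ, Φ ζ w =
        (Complex.exp (Complex.I * ((((z - w) * (starRingEnd ℂ) ζ).re : ℝ) : ℂ)) *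
          Complex.exp (-(ζ.re:ℂ)^2/(4*b) - (ζ.im:ℂ)^2/(4*(starRingEnd ℂ) b))) * f w := by
      intro ζ
      simp only [hΦ]
      have hsub : (((z - w) * (starRingEnd ℂ) ζ).re : ℝ)
          = (z * (starRingEnd ℂ) ζ).re - (w * (starRingEnd ℂ) ζ).re := by
        simp [sub_mul]
      rw [hsub]
      push_cast
      rw [show Complex.I * (((z * (starRingEnd ℂ) ζ).re : ℂ) - ((w * (starRingEnd ℂ) ζ).re : ℂ))
          = Complex.I * ((z * (starRingEnd ℂ) ζ).re : ℂ) +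
            (-Complex.I * ((w * (starRingEnd ℂ) ζ).re : ℂ)) by ring, Complex.exp_add]
      ring
    rw [integral_congr_ae (Eventually.of_forall hpt), integral_mul_const, inv_gauss hb (z - w)]
    ring
  rw [step1, step2, integral_congr_ae (Eventually.of_forall step3)]
  simp_rw [mul_assoc]
  rw [integral_const_mul, integral_const_mul, integral_const_mul]

end Stmt12

open Stmt12

theorem stmt_12 (f : SchwartzMap ℂ ℂ) (lam : ℝ) (hlam : 0 < lam) (z : ℂ) :
    Integrable (fun w =>
        Complex.exp (2 * Complex.I * (lam : ℂ) * (((z - w) ^ 2).re : ℂ)) * f w) volume ∧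
    Integrable (fun ζ =>
        Complex.exp (Complex.I * (((z * (starRingEnd ℂ) ζ).re : ℝ) : ℂ)) *
          Complex.exp (-Complex.I * (((ζ ^ 2).re : ℝ) : ℂ) / (8 * (lam : ℂ))) *
          fourierT (⇑f) ζ) volume ∧
    ((2 * lam / Real.pi : ℝ) : ℂ) * phaseConv lam (⇑f) z
      = ((1 / (4 * Real.pi ^ 2) : ℝ) : ℂ) *
          ∫ ζ, Complex.exp (Complex.I * (((z * (starRingEnd ℂ) ζ).re : ℝ) : ℂ)) *
            Complex.exp (-Complex.I * (((ζ ^ 2).re : ℝ) : ℂ) / (8 * (lam : ℂ))) *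
            fourierT (⇑f) ζ := by
  have hπ : (0:ℝ) < π := Real.pi_pos
  have hfc : Continuous (⇑f) := f.continuous
  have hFf := fourierT_integrable f
  have hFfc := fourierT_continuous f
  have hlamC : ((lam:ℂ)) ≠ 0 := Complex.ofReal_ne_zero.mpr (ne_of_gt hlam)
  set bf : ℝ → ℂ := fun ε => (ε:ℂ) - 2*Complex.I*(lam:ℂ) with hbf
  have hbre : ∀ ε : ℝ, (bf ε).re = ε := fun ε => by simp [hbf]
  have hbim : ∀ ε : ℝ, (bf ε).im = -(2*lam) := fun ε => by simp [hbf]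
  have habs_ge : ∀ ε : ℝ, 2*lam ≤ ‖(bf ε)‖ := fun ε => by
    have h := Complex.abs_im_le_norm (bf ε)
    rw [hbim ε, abs_neg, abs_of_pos (by positivity : (0:ℝ) < 2*lam)] at h
    exact h
  have habs_pos : ∀ ε : ℝ, 0 < ‖(bf ε)‖ := fun ε =>
    lt_of_lt_of_le (by positivity) (habs_ge ε)
  have hbne : ∀ ε : ℝ, bf ε ≠ 0 := fun ε =>
    norm_ne_zero_iff.mp (ne_of_gt (habs_pos ε))
  have hbf0 : bf 0 = -(2*Complex.I*(lam:ℂ)) := by simp [hbf]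
  have habs0 : ‖(bf 0)‖ = 2*lam := by
    rw [Complex.norm_def, Complex.normSq_apply, hbre, hbim]
    have h : (0:ℝ)*0 + (-(2*lam))*(-(2*lam)) = (2*lam)^2 := by ring
    rw [h, Real.sqrt_sq (by positivity)]
  have hbfc : Continuous bf := by
    simp only [hbf]
    exact Complex.continuous_ofReal.sub continuous_const
  -- first integrability claim
  have hI1 : Integrable (fun w : ℂ =>
      Complex.exp (2 * Complex.I * (lam : ℂ) * (((z - w) ^ 2).re : ℂ)) * f w) volume := by
    refine Integrable.mono' f.integrable.norm
      (((Complex.continuous_exp.comp (by fun_prop)).mul hfc).aestronglyMeasurable)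
      (Eventually.of_forall fun w => ?_)
    rw [norm_mul]
    have h0 : (2 * Complex.I * (lam : ℂ) * ((((z - w) ^ 2).re : ℝ) : ℂ)).re = 0 := by
      simp [Complex.mul_re, Complex.mul_im]
    rw [norm_cexp_eq_one h0, one_mul]
  -- second integrability claim
  have he2re : ∀ ζ : ℂ, (-Complex.I * (((ζ^2).re:ℝ):ℂ) / (8*(lam:ℂ))).re = 0 := by
    intro ζ
    have h : -Complex.I * (((ζ^2).re:ℝ):ℂ) / (8*(lam:ℂ))
        = ((-((ζ^2).re / (8*lam)) : ℝ):ℂ) * Complex.I := by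
      push_cast
      field_simp
    rw [h, Complex.re_ofReal_mul, Complex.I_re, mul_zero]
  have hI2 : Integrable (fun ζ : ℂ =>
      Complex.exp (Complex.I * (((z * (starRingEnd ℂ) ζ).re : ℝ):ℂ)) *
        Complex.exp (-Complex.I * (((ζ^2).re:ℝ):ℂ) / (8*(lam:ℂ))) * fourierT ⇑f ζ) volume := by
    refine Integrable.mono' hFf.norm
      ((((Complex.continuous_exp.comp (by fun_prop)).mul
        (Complex.continuous_exp.comp (by fun_prop))).mul hFfc).aestronglyMeasurable)
      (Eventually.of_forall fun ζ => ?_)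
    rw [norm_mul, norm_mul, norm_cexp_eq_one (by simp [Complex.mul_re]),
      norm_cexp_eq_one (he2re ζ), one_mul, one_mul]
  refine ⟨hI1, hI2, ?_⟩
  -- limits
  set l : Filter ℝ := nhdsWithin (0:ℝ) (Set.Ioi 0) with hl
  have hbt : Tendsto bf l (nhds (bf 0)) := (hbfc.tendsto 0).mono_left nhdsWithin_le_nhds
  have hconjt : Tendsto (fun ε : ℝ => (starRingEnd ℂ) (bf ε)) l (nhds ((starRingEnd ℂ) (bf 0))) :=
    (Complex.continuous_conj.tendsto (bf 0)).comp hbt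
  -- Claim A
  have tA : Tendsto (fun ε : ℝ => ∫ w : ℂ,
      Complex.exp (-(bf ε)*(((z-w).re:ℝ):ℂ)^2 - (starRingEnd ℂ) (bf ε)*(((z-w).im:ℝ):ℂ)^2) * f w)
      l (nhds (phaseConv lam (⇑f) z)) := by
    rw [phaseConv]
    refine tendsto_integral_filter_of_dominated_convergence (fun w => ‖f w‖)
      (Eventually.of_forall fun ε =>
        ((Complex.continuous_exp.comp (by fun_prop)).mul hfc).aestronglyMeasurable)
      ?_ f.integrable.norm ?_
    · filter_upwards [self_mem_nhdsWithin] with ε hε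
      refine Eventually.of_forall fun w => ?_
      rw [norm_mul]
      have hre : (-(bf ε)*(((z-w).re:ℝ):ℂ)^2 - (starRingEnd ℂ) (bf ε)*(((z-w).im:ℝ):ℂ)^2).re ≤ 0 := by
        have e1 : -(bf ε)*(((z-w).re:ℝ):ℂ)^2 = ((-((z-w).re^2) : ℝ):ℂ) * (bf ε) := by
          push_cast; ring
        have e2 : (starRingEnd ℂ) (bf ε)*(((z-w).im:ℝ):ℂ)^2
            = ((((z-w).im^2) : ℝ):ℂ) * (starRingEnd ℂ) (bf ε) := by
          push_cast; ring
        rw [Complex.sub_re, e1, e2, Complex.re_ofReal_mul, Complex.re_ofReal_mul,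
          Complex.conj_re, hbre]
        have hε' : (0:ℝ) < ε := hε
        nlinarith [sq_nonneg (z-w).re, sq_nonneg (z-w).im]
      simpa using mul_le_mul_of_nonneg_right (norm_cexp_le_one hre) (norm_nonneg (f w))
    · refine Eventually.of_forall fun w => ?_
      have hexp : Tendsto (fun ε : ℝ =>
          -(bf ε)*(((z-w).re:ℝ):ℂ)^2 - (starRingEnd ℂ) (bf ε)*(((z-w).im:ℝ):ℂ)^2) l
          (nhds (-(bf 0)*(((z-w).re:ℝ):ℂ)^2 - (starRingEnd ℂ) (bf 0)*(((z-w).im:ℝ):ℂ)^2)) :=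
        (hbt.neg.mul_const _).sub (hconjt.mul_const _)
      have hval : -(bf 0)*(((z-w).re:ℝ):ℂ)^2 - (starRingEnd ℂ) (bf 0)*(((z-w).im:ℝ):ℂ)^2
          = 2 * Complex.I * (lam:ℂ) * ((((z-w)^2).re : ℝ):ℂ) := by
        have h2re : ((((z-w)^2).re:ℝ):ℂ) = (((z-w).re:ℝ):ℂ)^2 - (((z-w).im:ℝ):ℂ)^2 := by
          have h : ((z-w)^2).re = (z-w).re^2 - (z-w).im^2 := by rw [sq, Complex.mul_re]; ring
          rw [h]; push_cast; ring
        have hconj : (starRingEnd ℂ) (bf 0) = 2*Complex.I*(lam:ℂ) := by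
          rw [hbf0, map_neg, map_mul, map_mul, Complex.conj_I, Complex.conj_ofReal, map_ofNat]
          ring
        rw [h2re, hconj, hbf0]
        ring
      rw [hval] at hexp
      exact ((Complex.continuous_exp.tendsto _).comp hexp).mul tendsto_const_nhds
  -- Claim B
  have h4b0 : (4:ℂ) * (bf 0) ≠ 0 := by
    simp [hbne 0]
  have h4bc0 : (4:ℂ) * ((starRingEnd ℂ) (bf 0)) ≠ 0 := by
    simp [hbne 0]
  have tConst : Tendsto (fun ε : ℝ => ((2*lam / ‖(bf ε)‖ : ℝ):ℂ)) l (nhds 1) := by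
    have habst : Tendsto (fun ε : ℝ => ‖(bf ε)‖) l (nhds (‖(bf 0)‖)) :=
      (continuous_norm.tendsto (bf 0)).comp hbt
    have hdiv : Tendsto (fun ε : ℝ => (2*lam / ‖(bf ε)‖ : ℝ)) l
        (nhds (2*lam / ‖(bf 0)‖)) :=
      tendsto_const_nhds.div habst (ne_of_gt (habs_pos 0))
    have h1 : (2*lam / ‖(bf 0)‖ : ℝ) = 1 := by
      rw [habs0]; field_simp
    have h3 := (Complex.continuous_ofReal.tendsto _).comp hdiv
    rw [h1] at h3
    simpa [Function.comp_def] using h3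
  have tB : Tendsto (fun ε : ℝ => ∫ ζ : ℂ,
      ((2*lam / ‖(bf ε)‖ : ℝ):ℂ) *
        (Complex.exp (Complex.I * (((z * (starRingEnd ℂ) ζ).re : ℝ):ℂ)) *
          Complex.exp (-(ζ.re:ℂ)^2/(4*bf ε) - (ζ.im:ℂ)^2/(4*(starRingEnd ℂ) (bf ε))) *
          fourierT ⇑f ζ)) l
      (nhds (∫ ζ : ℂ, Complex.exp (Complex.I * (((z * (starRingEnd ℂ) ζ).re : ℝ):ℂ)) *
        Complex.exp (-Complex.I * (((ζ^2).re:ℝ):ℂ) / (8*(lam:ℂ))) * fourierT ⇑f ζ)) := by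
    refine tendsto_integral_filter_of_dominated_convergence (fun ζ => ‖fourierT ⇑f ζ‖)
      ?_ ?_ hFf.norm ?_
    · refine Eventually.of_forall fun ε => ?_
      refine (continuous_const.mul (((Complex.continuous_exp.comp (by fun_prop)).mul
        (Complex.continuous_exp.comp ?_)).mul hFfc)).aestronglyMeasurable
      have : Continuous (fun ζ : ℂ => -(ζ.re:ℂ)^2/(4*bf ε) - (ζ.im:ℂ)^2/(4*(starRingEnd ℂ) (bf ε))) := by
        apply Continuous.sub
        · exact (Continuous.div_const (by fun_prop) _)
        · exact (Continuous.div_const (by fun_prop) _)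
      exact this
    · filter_upwards [self_mem_nhdsWithin] with ε hε
      refine Eventually.of_forall fun ζ => ?_
      have hε' : (0:ℝ) < ε := hε
      rw [norm_mul, norm_mul, norm_mul]
      have hc1 : ‖((2*lam / ‖(bf ε)‖ : ℝ):ℂ)‖ ≤ 1 := by
        rw [Complex.norm_real, Real.norm_eq_abs,
          _root_.abs_of_nonneg (div_nonneg (by positivity) (norm_nonneg _)),
          div_le_one (habs_pos ε)]
        exact habs_ge ε
      have hc2 : ‖Complex.exp (Complex.I * (((z * (starRingEnd ℂ) ζ).re : ℝ):ℂ))‖ = 1 :=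
        norm_cexp_eq_one (by simp [Complex.mul_re])
      have hreH : (-(ζ.re:ℂ)^2/(4*bf ε) - (ζ.im:ℂ)^2/(4*(starRingEnd ℂ) (bf ε))).re ≤ 0 := by
        have e1 : -(ζ.re:ℂ)^2/(4*bf ε) = ((-(ζ.re^2) : ℝ):ℂ) * ((4*bf ε)⁻¹) := by
          push_cast; ring
        have e2 : (ζ.im:ℂ)^2/(4*(starRingEnd ℂ) (bf ε))
            = (((ζ.im^2) : ℝ):ℂ) * ((4*(starRingEnd ℂ) (bf ε))⁻¹) := by
          push_cast; ring
        have hr1 : 0 ≤ (((4:ℂ)*bf ε)⁻¹).re := by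
          rw [Complex.inv_re]
          apply div_nonneg _ (Complex.normSq_nonneg _)
          have : ((4:ℂ)*bf ε).re = 4*ε := by simp [Complex.mul_re, hbre]
          rw [this]; positivity
        have hr2 : 0 ≤ (((4:ℂ)*(starRingEnd ℂ) (bf ε))⁻¹).re := by
          rw [Complex.inv_re]
          apply div_nonneg _ (Complex.normSq_nonneg _)
          have : ((4:ℂ)*(starRingEnd ℂ) (bf ε)).re = 4*ε := by
            simp [Complex.mul_re, hbre]
          rw [this]; positivity
        rw [Complex.sub_re, e1, e2, Complex.re_ofReal_mul, Complex.re_ofReal_mul]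
        nlinarith [sq_nonneg ζ.re, sq_nonneg ζ.im]
      have hc3 : ‖Complex.exp (-(ζ.re:ℂ)^2/(4*bf ε) - (ζ.im:ℂ)^2/(4*(starRingEnd ℂ) (bf ε)))‖ ≤ 1 :=
        norm_cexp_le_one hreH
      calc ‖((2*lam / ‖(bf ε)‖ : ℝ):ℂ)‖ *
            (‖Complex.exp (Complex.I * (((z * (starRingEnd ℂ) ζ).re : ℝ):ℂ))‖ *
              ‖Complex.exp (-(ζ.re:ℂ)^2/(4*bf ε) - (ζ.im:ℂ)^2/(4*(starRingEnd ℂ) (bf ε)))‖ *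
              ‖fourierT ⇑f ζ‖)
          ≤ 1 * (1 * 1 * ‖fourierT ⇑f ζ‖) := by
            gcongr
            rw [hc2]
        _ = ‖fourierT ⇑f ζ‖ := by ring
    · refine Eventually.of_forall fun ζ => ?_
      have hexp : Tendsto (fun ε : ℝ =>
          -(ζ.re:ℂ)^2/(4*bf ε) - (ζ.im:ℂ)^2/(4*(starRingEnd ℂ) (bf ε))) l
          (nhds (-(ζ.re:ℂ)^2/(4*bf 0) - (ζ.im:ℂ)^2/(4*(starRingEnd ℂ) (bf 0)))) :=
        (tendsto_const_nhds.div (tendsto_const_nhds.mul hbt) h4b0).sub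
          (tendsto_const_nhds.div (tendsto_const_nhds.mul hconjt) h4bc0)
      have hval : -(ζ.re:ℂ)^2/(4*bf 0) - (ζ.im:ℂ)^2/(4*(starRingEnd ℂ) (bf 0))
          = -Complex.I * (((ζ^2).re:ℝ):ℂ) / (8*(lam:ℂ)) := by
        have h2re : (((ζ^2).re:ℝ):ℂ) = (ζ.re:ℂ)^2 - (ζ.im:ℂ)^2 := by
          have h : (ζ^2).re = ζ.re^2 - ζ.im^2 := by rw [sq, Complex.mul_re]; ring
          rw [h]; push_cast; ring
        have hconj : (starRingEnd ℂ) (bf 0) = 2*Complex.I*(lam:ℂ) := by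
          rw [hbf0, map_neg, map_mul, map_mul, Complex.conj_I, Complex.conj_ofReal, map_ofNat]
          ring
        rw [h2re, hconj, hbf0]
        field_simp
        ring_nf
        simp [Complex.I_sq]
        ring
      rw [hval] at hexp
      have hexpt := (Complex.continuous_exp.tendsto _).comp hexp
      have hmid : Tendsto (fun ε : ℝ =>
          Complex.exp (Complex.I * (((z * (starRingEnd ℂ) ζ).re : ℝ):ℂ)) *
            Complex.exp (-(ζ.re:ℂ)^2/(4*bf ε) - (ζ.im:ℂ)^2/(4*(starRingEnd ℂ) (bf ε))) *
            fourierT ⇑f ζ) l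
          (nhds (Complex.exp (Complex.I * (((z * (starRingEnd ℂ) ζ).re : ℝ):ℂ)) *
            Complex.exp (-Complex.I * (((ζ^2).re:ℝ):ℂ)/(8*(lam:ℂ))) * fourierT ⇑f ζ)) :=
        Tendsto.mul (tendsto_const_nhds.mul hexpt) tendsto_const_nhds
      have hfin := tConst.mul hmid
      simpa only [one_mul] using hfin
  -- eventual equality of the two families
  have heq : ∀ᶠ ε in l, ((2 * lam / Real.pi : ℝ) : ℂ) *
      (∫ w : ℂ, Complex.exp (-(bf ε)*(((z-w).re:ℝ):ℂ)^2 -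
        (starRingEnd ℂ) (bf ε)*(((z-w).im:ℝ):ℂ)^2) * f w)
      = ((1 / (4 * Real.pi ^ 2) : ℝ) : ℂ) * ∫ ζ : ℂ,
        ((2*lam / ‖(bf ε)‖ : ℝ):ℂ) *
          (Complex.exp (Complex.I * (((z * (starRingEnd ℂ) ζ).re : ℝ):ℂ)) *
            Complex.exp (-(ζ.re:ℂ)^2/(4*bf ε) - (ζ.im:ℂ)^2/(4*(starRingEnd ℂ) (bf ε))) *
            fourierT ⇑f ζ) := by
    filter_upwards [self_mem_nhdsWithin] with ε hε
    have hbpos : 0 < (bf ε).re := by rw [hbre]; exact hε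
    have hk := key_identity f hbpos z
    rw [integral_const_mul, hk]
    have habs : (‖(bf ε)‖ : ℝ) ≠ 0 := ne_of_gt (habs_pos ε)
    have hπ0 : (π:ℝ) ≠ 0 := ne_of_gt hπ
    generalize (∫ w : ℂ, Complex.exp (-(bf ε)*(((z-w).re:ℝ):ℂ)^2 -
      (starRingEnd ℂ) (bf ε)*(((z-w).im:ℝ):ℂ)^2) * f w) = L
    have hπC : ((π:ℝ):ℂ) ≠ 0 := Complex.ofReal_ne_zero.mpr hπ0
    have hAC : ((‖(bf ε)‖ : ℝ):ℂ) ≠ 0 := Complex.ofReal_ne_zero.mpr habs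
    push_cast
    field_simp [hπC, hAC]
  have tA' := tA.const_mul (((2 * lam / Real.pi : ℝ) : ℂ))
  have tB' := tB.const_mul (((1 / (4 * Real.pi ^ 2) : ℝ) : ℂ))
  exact tendsto_nhds_unique (tA'.congr' heq) tB'
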